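/- Let L ∈ ℝ^{n×n} be symmetric with L·𝟙 = 0 (where 𝟙 is the all-ones vector), and suppose there is λ₂ > 0 such that wᵀLw ≥ λ₂·‖w‖² for every w ∈ ℝⁿ orthogonal to 𝟙. Let Π = I_n − (1/n)·𝟙𝟙ᵀ be the orthogonal projection onto the orthogonal complement of 𝟙, let v : [0, ∞) → ℝⁿ be continuous and bounded, and let x : [0, ∞) → ℝⁿ be differentiable with x′(t) = −L·x(t) − v(t) for all t ≥ 0. Then for all t ≥ 0: ‖Π·x(t)‖ ≤ e^{−λ₂·t}·‖Π·x(0)‖ + (1/λ₂)·sup_{0 ≤ τ ≤ t} ‖v(τ)‖. -/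

import Mathlib

open Matrix

/-- Euclidean norm of a real vector. -/
noncomputable def eNorm {n : Type*} [Fintype n] (x : n → ℝ) : ℝ :=
  Real.sqrt (∑ i, x i ^ 2)

/-- Projection onto the orthogonal complement of the all-ones vector:
`Π x = x − (1/n) 𝟙 𝟙ᵀ x`. -/
noncomputable def consProj {n : ℕ} (x : Fin n → ℝ) : Fin n → ℝ :=
  fun i => x i - (∑ l, x l) / n

/-- Set-ISS estimate for consensus dynamics `x' = −Lx − v` driven by a bounded disturbance:
`‖Πx(t)‖ ≤ e^{−λ₂ t} ‖Πx(0)‖ + (1/λ₂) sup_{0 ≤ τ ≤ t} ‖v(τ)‖`. -/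
lemma eNorm_nonneg' {n : Type*} [Fintype n] (x : n → ℝ) : 0 ≤ eNorm x :=
  Real.sqrt_nonneg _

lemma eNorm_sq {n : Type*} [Fintype n] (x : n → ℝ) : eNorm x ^ 2 = ∑ i, x i ^ 2 := by
  rw [eNorm, Real.sq_sqrt]
  exact Finset.sum_nonneg fun i _ => sq_nonneg _

lemma cauchy' {n : Type*} [Fintype n] (a b : n → ℝ) :
    ∑ i, a i * b i ≤ eNorm a * eNorm b := by
  have h := Finset.sum_mul_sq_le_sq_mul_sq Finset.univ a b
  calc ∑ i, a i * b i ≤ |∑ i, a i * b i| := le_abs_self _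
    _ = Real.sqrt ((∑ i, a i * b i) ^ 2) := (Real.sqrt_sq_eq_abs _).symm
    _ ≤ Real.sqrt ((∑ i, a i ^ 2) * (∑ i, b i ^ 2)) := Real.sqrt_le_sqrt h
    _ = eNorm a * eNorm b := by
        rw [eNorm, eNorm, Real.sqrt_mul (Finset.sum_nonneg fun i _ => sq_nonneg _)]

lemma sum_consProj {n : ℕ} (x : Fin n → ℝ) : ∑ i, consProj x i = 0 := by
  unfold consProj
  rw [Finset.sum_sub_distrib, Finset.sum_const, Finset.card_univ, Fintype.card_fin]
  rcases Nat.eq_zero_or_pos n with h | h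
  · subst h; simp
  · have hn : (n : ℝ) ≠ 0 := Nat.cast_ne_zero.2 h.ne'
    field_simp
    rw [nsmul_eq_mul, mul_div_assoc', mul_div_cancel_left₀ _ hn, sub_self]

lemma consProj_dot {n : ℕ} (y w : Fin n → ℝ) (hy : ∑ i, y i = 0) :
    ∑ i, y i * consProj w i = ∑ i, y i * w i := by
  unfold consProj
  simp only [mul_sub]
  rw [Finset.sum_sub_distrib, ← Finset.sum_mul, hy]
  ring_nf

theorem stmt15 {n : ℕ} (L : Matrix (Fin n) (Fin n) ℝ)
    (hLsymm : L.IsSymm) (hL1 : L.mulVec (fun _ => 1) = 0)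
    (lam2 : ℝ) (hlam2 : 0 < lam2)
    (hgap : ∀ w : Fin n → ℝ, w ⬝ᵥ (fun _ => (1 : ℝ)) = 0 →
      lam2 * eNorm w ^ 2 ≤ w ⬝ᵥ L.mulVec w)
    (v : ℝ → Fin n → ℝ) (hvcont : ContinuousOn v (Set.Ici 0))
    (hvbdd : ∃ C, ∀ t, 0 ≤ t → eNorm (v t) ≤ C)
    (x : ℝ → Fin n → ℝ)
    (hx : ∀ t, 0 ≤ t → HasDerivAt x (-(L.mulVec (x t)) - v t) t) :
    ∀ t, 0 ≤ t →
      eNorm (consProj (x t)) ≤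
        Real.exp (-lam2 * t) * eNorm (consProj (x 0))
          + (1 / lam2) * ⨆ τ : Set.Icc (0 : ℝ) t, eNorm (v τ) := by
  intro T hT
  obtain ⟨C, hC⟩ := hvbdd
  set M : ℝ := ⨆ τ : Set.Icc (0 : ℝ) T, eNorm (v τ) with hMdef
  have hbdd : BddAbove (Set.range fun τ : Set.Icc (0 : ℝ) T => eNorm (v τ)) := by
    refine ⟨C, ?_⟩
    rintro _ ⟨τ, rfl⟩
    exact hC τ τ.2.1
  have hM : ∀ τ, 0 ≤ τ → τ ≤ T → eNorm (v τ) ≤ M :=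
    fun τ h1 h2 => le_ciSup hbdd ⟨τ, h1, h2⟩
  have hM0 : 0 ≤ M := le_trans (eNorm_nonneg' _) (hM 0 le_rfl hT)
  set Y0 : ℝ := eNorm (consProj (x 0)) with hY0def
  have hY0 : 0 ≤ Y0 := eNorm_nonneg' _
  -- derivative of each component of consProj ∘ x
  set xd : ℝ → Fin n → ℝ := fun t => -(L.mulVec (x t)) - v t with hxddef
  set f : ℝ → ℝ := fun t => ∑ i, (consProj (x t) i) ^ 2 with hfdef
  set f' : ℝ → ℝ := fun t => ∑ i, 2 * consProj (x t) i ^ 1 * consProj (xd t) i with hf'def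
  have hfderiv : ∀ t, 0 ≤ t → HasDerivAt f (f' t) t := by
    intro t ht
    have hcomp : ∀ i, HasDerivAt (fun s => x s i) (xd t i) t :=
      fun i => hasDerivAt_pi.1 (hx t ht) i
    have hsum : HasDerivAt (fun s => ∑ l, x s l) (∑ l, xd t l) t :=
      HasDerivAt.fun_sum fun i _ => hcomp i
    have hy : ∀ i, HasDerivAt (fun s => consProj (x s) i) (consProj (xd t) i) t := by
      intro i
      unfold consProj
      exact (hcomp i).sub (hsum.div_const _)
    exact HasDerivAt.fun_sum fun i _ => (hy i).pow 2
  -- sum of consProj is 0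
  have hysum : ∀ t, ∑ i, consProj (x t) i = 0 := fun t => sum_consProj (x t)
  -- L x = L (consProj x)
  have hLx : ∀ t, L.mulVec (x t) = L.mulVec (consProj (x t)) := by
    intro t
    have hxeq : x t = fun i => consProj (x t) i + (∑ l, x t l) / n * 1 := by
      funext i; simp [consProj]
    conv_lhs => rw [hxeq]
    have : (fun i => consProj (x t) i + (∑ l, x t l) / n * 1)
        = consProj (x t) + ((∑ l, x t l) / n) • (fun _ => (1:ℝ)) := by
      funext i; simp [Pi.add_apply, Pi.smul_apply, smul_eq_mul]
    rw [this, Matrix.mulVec_add, Matrix.mulVec_smul, hL1]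
    simp
  -- the key differential inequality at any time t ≥ 0
  have hkey : ∀ t, 0 ≤ t → t ≤ T →
      f' t ≤ -2 * lam2 * f t + 2 * Real.sqrt (f t) * M := by
    intro t ht htT
    set y : Fin n → ℝ := consProj (x t) with hydef
    have hy0 : ∑ i, y i = 0 := hysum t
    have hdot : y ⬝ᵥ (fun _ => (1:ℝ)) = 0 := by
      simpa [dotProduct] using hy0
    have hgapt := hgap y hdot
    have hfy : f t = eNorm y ^ 2 := by rw [eNorm_sq]
    have hnormy : Real.sqrt (f t) = eNorm y := by
      rw [hfy, Real.sqrt_sq (eNorm_nonneg' _)]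
    have hstep1 : f' t = 2 * ∑ i, y i * xd t i := by
      simp only [hf'def, pow_one]
      rw [← hydef]
      have : ∑ i, 2 * y i * consProj (xd t) i = 2 * ∑ i, y i * consProj (xd t) i := by
        rw [Finset.mul_sum]; congr 1; funext i; ring
      rw [this, consProj_dot y (xd t) hy0]
    have hstep2 : ∑ i, y i * xd t i = -(y ⬝ᵥ L.mulVec y) - ∑ i, y i * v t i := by
      simp only [hxddef, Pi.sub_apply, Pi.neg_apply, mul_sub, mul_neg]
      rw [Finset.sum_sub_distrib, hLx t, ← hydef]
      congr 1
      rw [dotProduct, ← Finset.sum_neg_distrib]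
    have hcs : -∑ i, y i * v t i ≤ eNorm y * M := by
      have h1 : ∑ i, (-(y i)) * v t i ≤ eNorm (fun i => -(y i)) * eNorm (v t) :=
        cauchy' _ _
      have h2 : eNorm (fun i => -(y i)) = eNorm y := by
        unfold eNorm; congr 1
        exact Finset.sum_congr rfl fun i _ => by ring
      have h3 : ∑ i, (-(y i)) * v t i = -∑ i, y i * v t i := by
        rw [← Finset.sum_neg_distrib]; congr 1; funext i; ring
      rw [h3, h2] at h1
      calc -∑ i, y i * v t i ≤ eNorm y * eNorm (v t) := h1
        _ ≤ eNorm y * M := by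
            exact mul_le_mul_of_nonneg_left (hM t ht htT) (eNorm_nonneg' _)
    calc f' t = 2 * (-(y ⬝ᵥ L.mulVec y) - ∑ i, y i * v t i) := by rw [hstep1, hstep2]
      _ ≤ 2 * (-(lam2 * eNorm y ^ 2) + eNorm y * M) := by
          have := hgapt
          nlinarith [hcs]
      _ = -2 * lam2 * f t + 2 * Real.sqrt (f t) * M := by
          rw [hnormy, hfy]; ring
  -- epsilon-perturbed barrier
  have heps : ∀ ε : ℝ, 0 < ε →
      eNorm (consProj (x T)) ≤
        Real.exp (-lam2 * T) * Y0 + (1 / lam2) * M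
          + ε * (Real.exp (-lam2 * T) + 1 / lam2) := by
    intro ε hε
    set c2 : ℝ := (M + ε) / lam2 with hc2def
    have hc2 : 0 ≤ c2 := div_nonneg (by linarith) hlam2.le
    set c1 : ℝ := Y0 + ε - c2 with hc1def
    set z : ℝ → ℝ := fun s => c1 * Real.exp (-lam2 * s) + c2 with hzdef
    set zd : ℝ → ℝ := fun s => c1 * (Real.exp (-lam2 * s) * (-lam2)) with hzddef
    have hzderiv : ∀ s, HasDerivAt z (zd s) s := by
      intro s
      have h1 : HasDerivAt (fun s : ℝ => -lam2 * s) (-lam2) s := by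
        simpa using (hasDerivAt_id s).const_mul (-lam2)
      have h2 : HasDerivAt (fun s : ℝ => Real.exp (-lam2 * s))
          (Real.exp (-lam2 * s) * (-lam2)) s := h1.exp
      exact (h2.const_mul c1).add_const c2
    have hzpos : ∀ s, 0 ≤ s → 0 < z s := by
      intro s hs
      have hE : 0 < Real.exp (-lam2 * s) := Real.exp_pos _
      have hE1 : Real.exp (-lam2 * s) ≤ 1 :=
        Real.exp_le_one_iff.2 (by nlinarith)
      simp only [hzdef, hc1def]
      nlinarith
    have hzd : ∀ s, zd s = -lam2 * z s + (M + ε) := by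
      intro s
      simp only [hzddef, hzdef, hc2def]
      field_simp
      ring
    set B : ℝ → ℝ := fun s => z s ^ 2 with hBdef
    set B' : ℝ → ℝ := fun s => 2 * z s ^ 1 * zd s with hB'def
    have hBderiv : ∀ s, HasDerivAt B (B' s) s := fun s => (hzderiv s).pow 2
    have hfB : ∀ s ∈ Set.Icc (0:ℝ) T, f s ≤ B s := by
      apply image_le_of_deriv_right_lt_deriv_boundary
        (f := f) (f' := f') (B := B) (B' := B')
      · intro s hs
        exact ((hfderiv s hs.1).continuousAt).continuousWithinAt
      · intro s hs
        exact (hfderiv s hs.1).hasDerivWithinAt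
      · -- f 0 ≤ B 0
        have hf0 : f 0 = Y0 ^ 2 := by rw [hY0def, eNorm_sq]
        have hz0 : z 0 = Y0 + ε := by
          simp [hzdef, hc1def]
        simp only [hBdef, hz0, hf0]
        nlinarith
      · exact hBderiv
      · intro s hs hfs
        have hzs := hzpos s hs.1
        have hkey' := hkey s hs.1 hs.2.le
        have hsq : Real.sqrt (f s) = z s := by
          rw [hfs]; simp only [hBdef]
          exact Real.sqrt_sq hzs.le
        rw [hsq] at hkey'
        have hBs : B s = z s ^ 2 := rfl
        calc f' s ≤ -2 * lam2 * f s + 2 * z s * M := hkey'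
          _ = -2 * lam2 * z s ^ 2 + 2 * z s * M := by rw [hfs, hBs]
          _ < 2 * z s ^ 1 * (-lam2 * z s + (M + ε)) := by nlinarith
          _ = B' s := by simp only [hB'def]; rw [hzd s]
    have hfT : f T ≤ B T := hfB T ⟨hT, le_rfl⟩
    have h1 : eNorm (consProj (x T)) ≤ z T := by
      have h2 : eNorm (consProj (x T)) = Real.sqrt (f T) := by
        rw [hfdef, eNorm]
      rw [h2]
      calc Real.sqrt (f T) ≤ Real.sqrt (B T) := Real.sqrt_le_sqrt hfT
        _ = z T := by
            simp only [hBdef]; exact Real.sqrt_sq (hzpos T hT).le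
    have hE : 0 < Real.exp (-lam2 * T) := Real.exp_pos _
    have h3 : z T ≤ (Y0 + ε) * Real.exp (-lam2 * T) + c2 := by
      simp only [hzdef, hc1def]
      nlinarith
    have h4 : c2 = M / lam2 + ε / lam2 := by
      rw [hc2def]; ring
    calc eNorm (consProj (x T)) ≤ z T := h1
      _ ≤ (Y0 + ε) * Real.exp (-lam2 * T) + c2 := h3
      _ = Real.exp (-lam2 * T) * Y0 + (1 / lam2) * M
          + ε * (Real.exp (-lam2 * T) + 1 / lam2) := by rw [h4]; ring
  -- take ε → 0
  have hK : 0 < Real.exp (-lam2 * T) + 1 / lam2 := by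
    have := Real.exp_pos (-lam2 * T)
    have := one_div_pos.2 hlam2
    linarith
  refine le_of_forall_pos_le_add ?_
  intro ε hε
  have := heps (ε / (Real.exp (-lam2 * T) + 1 / lam2)) (div_pos hε hK)
  calc eNorm (consProj (x T)) ≤ Real.exp (-lam2 * T) * Y0 + (1 / lam2) * M
        + (ε / (Real.exp (-lam2 * T) + 1 / lam2)) * (Real.exp (-lam2 * T) + 1 / lam2) := this
    _ = Real.exp (-lam2 * T) * Y0 + (1 / lam2) * M + ε := by
        rw [div_mul_cancel₀ _ hK.ne']
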